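/- Bound on the expectation of the extension: Let X be a random variable taking values in 𝒳 = ∏_{i=1}^n 𝒳_i, let 𝒴 ⊆ 𝒳 be a measurable subset with p = 1 − P[X ∈ 𝒴] and P[X ∈ 𝒴] > 0, let f : 𝒳 → ℝ be measurable with |f(x) − f(y)| ≤ d_c(x, y) for all x, y ∈ 𝒴 and f(X)·1{X ∈ 𝒴} integrable, and define f̄(x) = inf_{y ∈ 𝒴} { f(y) + d_c(x, y) }, M = E[f̄(X)], and m = E[f(X) | X ∈ 𝒴]. Then M ≤ m + p·c̄, where c̄ = Σ_{i=1}^n c_i. -/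

import Mathlib

open MeasureTheory
open scoped ProbabilityTheory Classical

/-- Bound on the expectation of the extension: `M = E[f̄(X)] ≤ m + p c̄`. -/
theorem extension_mean_le_cond_mean_add_p_cbar
    {n : ℕ} {Ω : Type*} [MeasureSpace Ω] [IsProbabilityMeasure (ℙ : Measure Ω)]
    {𝒳 : Fin n → Type*} [∀ i, MeasurableSpace (𝒳 i)]
    (X : Ω → ∀ i, 𝒳 i) (hX : Measurable X)
    (c : Fin n → ℝ) (hc : ∀ i, 0 ≤ c i)
    (𝒴 : Set (∀ i, 𝒳 i)) (h𝒴 : MeasurableSet 𝒴)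
    (hpos : 0 < ℙ (X ⁻¹' 𝒴))
    (f : (∀ i, 𝒳 i) → ℝ) (hf : Measurable f)
    (hbd : ∀ x ∈ 𝒴, ∀ y ∈ 𝒴, |f x - f y| ≤ ∑ i, if x i ≠ y i then c i else 0)
    (hint : Integrable (fun ω => 𝒴.indicator f (X ω)) ℙ)
    (fbar : (∀ i, 𝒳 i) → ℝ)
    (hfbar : fbar = fun x => sInf ((fun y => f y + ∑ i, if x i ≠ y i then c i else 0) '' 𝒴))
    (hfbarint : Integrable (fun ω => fbar (X ω)) ℙ)
    (p M m : ℝ)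
    (hp : p = 1 - (ℙ (X ⁻¹' 𝒴)).toReal)
    (hM : M = ∫ ω, fbar (X ω))
    (hm : m = (∫ ω, 𝒴.indicator f (X ω)) / (ℙ (X ⁻¹' 𝒴)).toReal) :
    M ≤ m + p * ∑ i, c i := by
  classical
  have hmeasY : MeasurableSet (X ⁻¹' 𝒴) := hX h𝒴
  have hfin : ℙ (X ⁻¹' 𝒴) ≠ ⊤ := measure_ne_top _ _
  set t : ℝ := (ℙ (X ⁻¹' 𝒴)).toReal with htdef
  have htpos : 0 < t := ENNReal.toReal_pos hpos.ne' hfin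
  have ht1 : t ≤ 1 := by
    have h := prob_le_one (μ := (ℙ : Measure Ω)) (s := X ⁻¹' 𝒴)
    simpa using ENNReal.toReal_mono (by simp) h
  have hpnonneg : 0 ≤ p := by rw [hp]; linarith
  set cbar : ℝ := ∑ i, c i with hcbar
  have hcbar0 : 0 ≤ cbar := Finset.sum_nonneg fun i _ => hc i
  have hdnonneg : ∀ x y : ∀ i, 𝒳 i, 0 ≤ ∑ i, if x i ≠ y i then c i else 0 :=
    fun x y => Finset.sum_nonneg fun i _ => by split <;> simp [hc i]
  have hdle : ∀ x y : ∀ i, 𝒳 i, (∑ i, if x i ≠ y i then c i else 0) ≤ cbar :=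
    fun x y => Finset.sum_le_sum fun i _ => by split <;> simp [hc i]
  -- 𝒴 is nonempty
  obtain ⟨ω₀, hω₀⟩ : (X ⁻¹' 𝒴).Nonempty := by
    by_contra h
    rw [Set.not_nonempty_iff_eq_empty] at h
    rw [h] at hpos; simp at hpos
  have hy₀ : X ω₀ ∈ 𝒴 := hω₀
  -- bounded below
  have hbdd : ∀ x : ∀ i, 𝒳 i, BddBelow ((fun y => f y + ∑ i, if x i ≠ y i then c i else 0) '' 𝒴) := by
    intro x
    refine ⟨f (X ω₀) - cbar, ?_⟩
    rintro r ⟨z, hz, rfl⟩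
    have h1 : |f z - f (X ω₀)| ≤ cbar := le_trans (hbd z hz _ hy₀) (hdle _ _)
    have h2 := abs_le.mp h1
    have := hdnonneg x z
    dsimp only
    linarith [h2.1]
  -- pointwise bound on 𝒴: fbar x ≤ f x
  have hfbar_le_on : ∀ x ∈ 𝒴, fbar x ≤ f x := by
    intro x hx
    rw [hfbar]
    have hmem : f x + (∑ i, if x i ≠ x i then c i else 0) ∈
        (fun y => f y + ∑ i, if x i ≠ y i then c i else 0) '' 𝒴 := ⟨x, hx, rfl⟩
    have := csInf_le (hbdd x) hmem
    simpa using this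
  -- pointwise bound everywhere: fbar x ≤ f y + cbar for any y ∈ 𝒴
  have hfbar_le_all : ∀ x, ∀ y ∈ 𝒴, fbar x ≤ f y + cbar := by
    intro x y hy
    rw [hfbar]
    have hmem : f y + (∑ i, if x i ≠ y i then c i else 0) ∈
        (fun z => f z + ∑ i, if x i ≠ z i then c i else 0) '' 𝒴 := ⟨y, hy, rfl⟩
    exact le_trans (csInf_le (hbdd x) hmem) (by linarith [hdle x y])
  -- there exists y ∈ 𝒴 with f y ≤ m
  have hIm : (∫ ω, 𝒴.indicator f (X ω)) = m * t := by
    rw [hm]; field_simp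
  have hind_comp : (fun ω => 𝒴.indicator f (X ω)) =
      (X ⁻¹' 𝒴).indicator (fun ω => f (X ω)) := by
    funext ω; simp [Set.indicator_apply, Set.mem_preimage]
  obtain ⟨y, hy𝒴, hym⟩ : ∃ y ∈ 𝒴, f y ≤ m := by
    by_contra h
    push_neg at h
    -- g - h ≥ 0, integral 0
    set g : Ω → ℝ := fun ω => 𝒴.indicator f (X ω) - (X ⁻¹' 𝒴).indicator (fun _ => m) ω with hg
    have hintm : Integrable ((X ⁻¹' 𝒴).indicator (fun _ => m)) ℙ :=
      (integrable_const m).indicator hmeasY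
    have hgint : Integrable g ℙ := hint.sub hintm
    have hg0 : 0 ≤ g := by
      intro ω
      by_cases hω : ω ∈ X ⁻¹' 𝒴
      · have hmf : m < f (X ω) := h _ hω
        have e1 : 𝒴.indicator f (X ω) = f (X ω) := Set.indicator_of_mem (Set.mem_preimage.mp hω) f
        have e2 : (X ⁻¹' 𝒴).indicator (fun _ => m) ω = m := Set.indicator_of_mem hω _
        simp only [hg, Pi.zero_apply, e1, e2]
        linarith
      · have e1 : 𝒴.indicator f (X ω) = 0 := Set.indicator_of_notMem (fun hh => hω (Set.mem_preimage.mpr hh)) f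
        have e2 : (X ⁻¹' 𝒴).indicator (fun _ => m) ω = 0 := Set.indicator_of_notMem hω _
        simp only [hg, Pi.zero_apply, e1, e2]
        simp
    have hgI : ∫ ω, g ω = 0 := by
      show ∫ ω, (𝒴.indicator f (X ω) - (X ⁻¹' 𝒴).indicator (fun _ => m) ω) = 0
      rw [integral_sub hint hintm, hIm, integral_indicator_const _ hmeasY]
      simp [htdef, smul_eq_mul, mul_comm, measureReal_def]
    have := (integral_eq_zero_iff_of_nonneg hg0 hgint).mp hgI
    -- g =ᵐ 0, but g > 0 on X⁻¹𝒴 which has positive measure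
    have hsub : X ⁻¹' 𝒴 ⊆ {ω | g ω ≠ 0} := by
      intro ω hω
      have : m < f (X ω) := h _ hω
      have e1 : 𝒴.indicator f (X ω) = f (X ω) := Set.indicator_of_mem (Set.mem_preimage.mp hω) f
      have e2 : (X ⁻¹' 𝒴).indicator (fun _ => m) ω = m := Set.indicator_of_mem hω _
      simp only [Set.mem_setOf_eq, hg, e1, e2]
      intro hcon; linarith [sub_eq_zero.mp hcon]
    have h0 : ℙ {ω | g ω ≠ 0} = 0 := by
      have : g =ᵐ[ℙ] 0 := this
      simpa [Filter.EventuallyEq, ae_iff] using this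
    exact absurd (measure_mono_null hsub h0) hpos.ne'
  -- main pointwise estimate
  have hpt : ∀ ω, fbar (X ω) ≤ 𝒴.indicator f (X ω) +
      (X ⁻¹' 𝒴)ᶜ.indicator (fun _ => f y + cbar) ω := by
    intro ω
    by_cases hω : ω ∈ X ⁻¹' 𝒴
    · have e1 : 𝒴.indicator f (X ω) = f (X ω) := Set.indicator_of_mem (Set.mem_preimage.mp hω) f
      have e2 : (X ⁻¹' 𝒴)ᶜ.indicator (fun _ => f y + cbar) ω = 0 :=
        Set.indicator_of_notMem (by simp [hω]) _
      rw [e1, e2]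
      simpa using hfbar_le_on _ hω
    · have e1 : 𝒴.indicator f (X ω) = 0 := Set.indicator_of_notMem (fun hh => hω (Set.mem_preimage.mpr hh)) f
      have e2 : (X ⁻¹' 𝒴)ᶜ.indicator (fun _ => f y + cbar) ω = f y + cbar :=
        Set.indicator_of_mem (by simp [hω]) _
      rw [e1, e2]
      simpa using hfbar_le_all (X ω) y hy𝒴
  -- integrate
  have hintc : Integrable ((X ⁻¹' 𝒴)ᶜ.indicator (fun _ => f y + cbar)) ℙ :=
    (integrable_const _).indicator hmeasY.compl
  have hMle : M ≤ m * t + p * (f y + cbar) := by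
    rw [hM]
    calc ∫ ω, fbar (X ω)
        ≤ ∫ ω, (𝒴.indicator f (X ω) + (X ⁻¹' 𝒴)ᶜ.indicator (fun _ => f y + cbar) ω) :=
          integral_mono hfbarint (hint.add hintc) hpt
      _ = (∫ ω, 𝒴.indicator f (X ω)) + ∫ ω, (X ⁻¹' 𝒴)ᶜ.indicator (fun _ => f y + cbar) ω :=
          integral_add hint hintc
      _ = m * t + p * (f y + cbar) := by
          rw [hIm, integral_indicator_const _ hmeasY.compl]
          have hcompl : (ℙ (X ⁻¹' 𝒴)ᶜ).toReal = p := by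
            rw [measure_compl hmeasY hfin, measure_univ, hp,
              ENNReal.toReal_sub_of_le prob_le_one (by simp)]
            simp [htdef]
          rw [measureReal_def, hcompl]; ring_nf
  have : p * f y ≤ p * m := mul_le_mul_of_nonneg_left hym hpnonneg
  have ht_p : t + p = 1 := by rw [hp]; ring
  calc M ≤ m * t + p * (f y + cbar) := hMle
    _ = m * t + p * f y + p * cbar := by ring
    _ ≤ m * t + p * m + p * cbar := by linarith
    _ = m * (t + p) + p * cbar := by ring
    _ = m + p * cbar := by rw [ht_p]; ring
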